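/- Let M and K be n×n real symmetric positive definite matrices, let h > 0 and β ≥ 1/4. Then every pair of sequences (x_k), (v_k) in ℝⁿ satisfying the SyLiPN recursion x_{k+1} = x_k + h v_k + ½ h² a_k, v_{k+1} = v_k + ½ h (a_k + a_{k+1}), where a_k = −(M + β h² K)⁻¹ K x_k (the matrix M + β h² K being invertible since it is positive definite), is bounded: there exists a constant C such that ‖x_k‖ + ‖v_k‖ ≤ C for all k. In other words, SyLiPN is linearly unconditionally stable for β ≥ 1/4. -/

import Mathlib

open Matrix

section Aux


variable {n : ℕ}

lemma symdot {A : Matrix (Fin n) (Fin n) ℝ} (hA : Aᵀ = A) (x y : Fin n → ℝ) :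
    x ⬝ᵥ A *ᵥ y = y ⬝ᵥ A *ᵥ x := by
  rw [dotProduct_mulVec, ← Matrix.mulVec_transpose, hA, dotProduct_comm]

lemma transpose_of_posSemidef {A : Matrix (Fin n) (Fin n) ℝ} (hA : A.PosSemidef) : Aᵀ = A := by
  have := hA.1
  rwa [Matrix.IsHermitian, Matrix.conjTranspose_eq_transpose_of_trivial] at this

lemma quad_nonneg {A : Matrix (Fin n) (Fin n) ℝ} (hA : A.PosSemidef) (x : Fin n → ℝ) :
    0 ≤ x ⬝ᵥ A *ᵥ x := by
  simpa using hA.dotProduct_mulVec_nonneg x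

/-- Cauchy–Schwarz for a positive semidefinite bilinear form. -/
lemma quad_cs {A : Matrix (Fin n) (Fin n) ℝ} (hA : A.PosSemidef) (x y : Fin n → ℝ) :
    (x ⬝ᵥ A *ᵥ y) ^ 2 ≤ (x ⬝ᵥ A *ᵥ x) * (y ⬝ᵥ A *ᵥ y) := by
  have hs := transpose_of_posSemidef hA
  have h := discrim_le_zero (a := y ⬝ᵥ A *ᵥ y) (b := 2 * (x ⬝ᵥ A *ᵥ y)) (c := x ⬝ᵥ A *ᵥ x) ?_
  · rw [discrim] at h; nlinarith [h]
  · intro t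
    have h0 := quad_nonneg hA (x + t • y)
    have hyx : y ⬝ᵥ A *ᵥ x = x ⬝ᵥ A *ᵥ y := symdot hs y x
    simp only [Matrix.mulVec_add, Matrix.mulVec_smul, dotProduct_add,
      add_dotProduct, dotProduct_smul, smul_dotProduct,
      smul_eq_mul] at h0
    rw [hyx] at h0
    ring_nf at h0 ⊢
    linarith

lemma mulVec_norm_bound (A : Matrix (Fin n) (Fin n) ℝ) :
    ∃ C : ℝ, 0 ≤ C ∧ ∀ z : Fin n → ℝ, ‖A *ᵥ z‖ ≤ C * ‖z‖ := by
  refine ⟨∑ i, ∑ j, |A i j|, by positivity, fun z => ?_⟩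
  rw [show (∑ i, ∑ j, |A i j|) * ‖z‖ = ‖z‖ * ∑ i, ∑ j, |A i j| by ring]
  refine (pi_norm_le_iff_of_nonneg (by positivity)).2 fun i => ?_
  calc ‖(A *ᵥ z) i‖ = |∑ j, A i j * z j| := rfl
    _ ≤ ∑ j, |A i j * z j| := Finset.abs_sum_le_sum_abs _ _
    _ ≤ ∑ j, |A i j| * ‖z‖ := by
        refine Finset.sum_le_sum fun j _ => ?_
        rw [abs_mul]
        exact mul_le_mul_of_nonneg_left (norm_le_pi_norm z j) (abs_nonneg _)
    _ = ‖z‖ * ∑ j, |A i j| := by rw [← Finset.sum_mul]; ring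
    _ ≤ ‖z‖ * ∑ i, ∑ j, |A i j| := by
        refine mul_le_mul_of_nonneg_left ?_ (norm_nonneg _)
        refine Finset.single_le_sum (f := fun i => ∑ j, |A i j|) (fun i _ => by positivity)
          (Finset.mem_univ i)

lemma norm_sq_le_dot (z : Fin n → ℝ) : ‖z‖ ^ 2 ≤ z ⬝ᵥ z := by
  have h1 : ‖z‖ ≤ Real.sqrt (z ⬝ᵥ z) := by
    refine (pi_norm_le_iff_of_nonneg (Real.sqrt_nonneg _)).2 fun i => ?_
    have : z i ^ 2 ≤ z ⬝ᵥ z := by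
      have : z ⬝ᵥ z = ∑ j, z j ^ 2 := by simp [dotProduct, sq]
      rw [this]
      exact Finset.single_le_sum (f := fun j => z j ^ 2) (fun j _ => sq_nonneg _)
        (Finset.mem_univ i)
    calc ‖z i‖ = Real.sqrt (z i ^ 2) := by rw [Real.sqrt_sq_eq_abs]; rfl
      _ ≤ Real.sqrt (z ⬝ᵥ z) := Real.sqrt_le_sqrt this
  calc ‖z‖ ^ 2 ≤ Real.sqrt (z ⬝ᵥ z) ^ 2 := by
        exact pow_le_pow_left₀ (norm_nonneg _) h1 2
    _ = z ⬝ᵥ z := Real.sq_sqrt (by simpa using quad_nonneg (Matrix.PosSemidef.one) z |>.trans_eq (by simp))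

/-- Positive definite quadratic forms are bounded below by a positive multiple of `‖x‖²`. -/
lemma posdef_lower {A : Matrix (Fin n) (Fin n) ℝ} (hA : A.PosDef) :
    ∃ c : ℝ, 0 < c ∧ ∀ x : Fin n → ℝ, c * ‖x‖ ^ 2 ≤ x ⬝ᵥ A *ᵥ x := by
  obtain ⟨C, hC0, hC⟩ := mulVec_norm_bound A⁻¹
  have hAinv : A⁻¹.PosSemidef := hA.inv.posSemidef
  have hApsd : A.PosSemidef := hA.posSemidef
  refine ⟨1 / (n * C + 1), by positivity, fun x => ?_⟩
  by_cases hx : x = 0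
  · simp [hx]
  -- x ⬝ᵥ A⁻¹ x ≤ n * C * ‖x‖^2
  have hup : x ⬝ᵥ A⁻¹ *ᵥ x ≤ (n * C + 1) * ‖x‖ ^ 2 := by
    have h1 : x ⬝ᵥ A⁻¹ *ᵥ x ≤ ∑ _i : Fin n, ‖x‖ * (C * ‖x‖) := by
      rw [dotProduct]
      refine Finset.sum_le_sum fun i _ => ?_
      calc x i * (A⁻¹ *ᵥ x) i ≤ |x i * (A⁻¹ *ᵥ x) i| := le_abs_self _
        _ = |x i| * |(A⁻¹ *ᵥ x) i| := abs_mul _ _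
        _ ≤ ‖x‖ * (C * ‖x‖) := by
            refine mul_le_mul (norm_le_pi_norm x i)
              ((norm_le_pi_norm _ i).trans (hC x)) (abs_nonneg _) (norm_nonneg _)
    simp only [Finset.sum_const, Finset.card_univ, Fintype.card_fin, nsmul_eq_mul] at h1
    nlinarith [sq_nonneg ‖x‖, norm_nonneg x]
  -- Cauchy-Schwarz with y = A⁻¹ x
  have hinv : A *ᵥ (A⁻¹ *ᵥ x) = x := by
    rw [Matrix.mulVec_mulVec, Matrix.mul_nonsing_inv _ (isUnit_iff_isUnit_det _ |>.1 hA.isUnit), Matrix.one_mulVec]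
  have hcs := quad_cs hApsd x (A⁻¹ *ᵥ x)
  rw [hinv] at hcs
  have hsym : (A⁻¹ *ᵥ x) ⬝ᵥ x = x ⬝ᵥ A⁻¹ *ᵥ x := dotProduct_comm _ _
  have hdd : ‖x‖ ^ 2 ≤ x ⬝ᵥ x := norm_sq_le_dot x
  rw [hsym] at hcs
  -- (x⬝x)^2 ≤ (xAx)(xA⁻¹x) ≤ (xAx)(n C+1)‖x‖², and ‖x‖^2 ≤ x⬝x
  have hxn : 0 < ‖x‖ := norm_pos_iff.mpr hx
  have hxx : (0:ℝ) < ‖x‖ ^ 2 := pow_pos hxn 2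
  have hAq : 0 ≤ x ⬝ᵥ A *ᵥ x := quad_nonneg hApsd x
  have h4 : ‖x‖ ^ 2 * ‖x‖ ^ 2 ≤ (x ⬝ᵥ A *ᵥ x) * ((n * C + 1) * ‖x‖ ^ 2) := by
    nlinarith [hdd, hcs, hup, quad_nonneg hAinv x]
  rw [div_mul_eq_mul_div, one_mul, div_le_iff₀ (by positivity)]
  nlinarith [h4, hxx]


end Aux

/-- Linear unconditional stability of SyLiPN in `ℝⁿ`.
For `n × n` real symmetric positive definite matrices `M`, `K`, timestep `h > 0`
and `β ≥ 1/4`, every trajectory of the SyLiPN recursion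
`x_{k+1} = x_k + h v_k + ½ h² a_k`, `v_{k+1} = v_k + ½ h (a_k + a_{k+1})`,
`a_k = −(M + β h² K)⁻¹ K x_k` is bounded. -/
theorem stmt_4 (n : ℕ) (M K : Matrix (Fin n) (Fin n) ℝ)
    (hM : M.PosDef) (hK : K.PosDef) (h β : ℝ) (hh : 0 < h) (hβ : β ≥ 1 / 4)
    (x v a : ℕ → (Fin n → ℝ))
    (hx : ∀ k, x (k + 1) = x k + h • v k + ((1 : ℝ) / 2 * h ^ 2) • a k)
    (hv : ∀ k, v (k + 1) = v k + (h / 2) • (a k + a (k + 1)))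
    (ha : ∀ k, a k = -((M + (β * h ^ 2) • K)⁻¹.mulVec (K.mulVec (x k)))) :
    ∃ C : ℝ, ∀ k, ‖x k‖ + ‖v k‖ ≤ C := by
  classical
  have hb2 : 0 < β * h ^ 2 := by nlinarith
  set b2 : ℝ := β * h ^ 2 with hb2def
  set S : Matrix (Fin n) (Fin n) ℝ := M + b2 • K with hSdef
  have hKt : Kᵀ = K := transpose_of_posSemidef hK.posSemidef
  have hMt : Mᵀ = M := transpose_of_posSemidef hM.posSemidef
  have hsmul : (b2 • K).PosSemidef := by
    refine Matrix.PosSemidef.of_dotProduct_mulVec_nonneg ?_ (fun z => ?_)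
    · rw [Matrix.IsHermitian, Matrix.conjTranspose_eq_transpose_of_trivial,
        Matrix.transpose_smul, hKt]
    · rw [Matrix.smul_mulVec, dotProduct_smul, smul_eq_mul]
      have := quad_nonneg hK.posSemidef z
      simp only [star_trivial]
      nlinarith [quad_nonneg hK.posSemidef z]
  have hS : S.PosDef := hM.add_posSemidef hsmul
  have hSt : Sᵀ = S := transpose_of_posSemidef hS.posSemidef
  have hSdetu : IsUnit S.det := (Matrix.isUnit_iff_isUnit_det _).1 hS.isUnit
  have hKdetu : IsUnit K.det := (Matrix.isUnit_iff_isUnit_det _).1 hK.isUnit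
  have hMdetu : IsUnit M.det := (Matrix.isUnit_iff_isUnit_det _).1 hM.isUnit
  -- Key vector identities
  have haS : ∀ k, S *ᵥ a k = -(K *ᵥ x k) := by
    intro k
    rw [ha k, Matrix.mulVec_neg, Matrix.mulVec_mulVec,
      Matrix.mul_nonsing_inv _ hSdetu, Matrix.one_mulVec]
  have haM : ∀ k, M *ᵥ a k = -(K *ᵥ x k) - b2 • (K *ᵥ a k) := by
    intro k
    have h1 : S *ᵥ a k = M *ᵥ a k + b2 • (K *ᵥ a k) := by
      rw [hSdef, Matrix.add_mulVec, Matrix.smul_mulVec]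
    rw [haS k] at h1
    linear_combination (norm := module) -h1
  -- scalar relation: pairing against M
  have sb : ∀ k (z : Fin n → ℝ), z ⬝ᵥ M *ᵥ a k
      = -(z ⬝ᵥ K *ᵥ x k) - b2 * (z ⬝ᵥ K *ᵥ a k) := by
    intro k z
    rw [haM k]
    simp [dotProduct_sub, dotProduct_neg, dotProduct_smul]
  -- cross identity
  have hcross : ∀ k, x k ⬝ᵥ K *ᵥ a (k+1) = x (k+1) ⬝ᵥ K *ᵥ a k := by
    intro k
    have hKu : K *ᵥ x k = -(S *ᵥ a k) := by rw [haS k, neg_neg]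
    have hKu' : K *ᵥ x (k+1) = -(S *ᵥ a (k+1)) := by rw [haS (k+1), neg_neg]
    calc x k ⬝ᵥ K *ᵥ a (k+1) = a (k+1) ⬝ᵥ K *ᵥ x k := symdot hKt _ _
      _ = a (k+1) ⬝ᵥ (-(S *ᵥ a k)) := by rw [hKu]
      _ = -(a (k+1) ⬝ᵥ S *ᵥ a k) := by rw [dotProduct_neg]
      _ = -(a k ⬝ᵥ S *ᵥ a (k+1)) := by rw [symdot hSt]
      _ = a k ⬝ᵥ (-(S *ᵥ a (k+1))) := by rw [dotProduct_neg]
      _ = a k ⬝ᵥ K *ᵥ x (k+1) := by rw [hKu']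
      _ = x (k+1) ⬝ᵥ K *ᵥ a k := symdot hKt _ _
  -- the conserved energy
  set F : ℕ → ℝ := fun k =>
    v k ⬝ᵥ M *ᵥ v k - x k ⬝ᵥ M *ᵥ a k - h ^ 2 / 4 * (a k ⬝ᵥ M *ᵥ a k) with hFdef
  have hcons : ∀ k, F (k + 1) = F k := by
    intro k
    have e1 : v (k+1) ⬝ᵥ M *ᵥ v (k+1)
        = v k ⬝ᵥ M *ᵥ v k + h * (v k ⬝ᵥ M *ᵥ a k) + h * (v k ⬝ᵥ M *ᵥ a (k+1))
          + h^2/4 * (a k ⬝ᵥ M *ᵥ a k) + h^2/2 * (a k ⬝ᵥ M *ᵥ a (k+1))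
          + h^2/4 * (a (k+1) ⬝ᵥ M *ᵥ a (k+1)) := by
      rw [hv k]
      simp only [Matrix.mulVec_add, Matrix.mulVec_smul, dotProduct_add,
        add_dotProduct, dotProduct_smul, smul_dotProduct, smul_eq_mul]
      rw [symdot hMt (a k) (v k), symdot hMt (a (k+1)) (v k), symdot hMt (a (k+1)) (a k)]
      ring
    have e2 : x (k+1) ⬝ᵥ M *ᵥ a (k+1)
        = x k ⬝ᵥ M *ᵥ a (k+1) + h * (v k ⬝ᵥ M *ᵥ a (k+1))
          + h^2/2 * (a k ⬝ᵥ M *ᵥ a (k+1)) := by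
      rw [hx k]
      simp only [add_dotProduct, smul_dotProduct, smul_eq_mul]
      ring
    -- reduce to: h * (w⬝Mb) + h²/2 * (b⬝Mb) + u⬝Mb - u⬝Mb' = 0
    have key : h * (v k ⬝ᵥ M *ᵥ a k) + h^2/2 * (a k ⬝ᵥ M *ᵥ a k)
        + x k ⬝ᵥ M *ᵥ a k - x k ⬝ᵥ M *ᵥ a (k+1) = 0 := by
      rw [sb k (v k), sb k (a k), sb k (x k), sb (k+1) (x k)]
      -- expand x(k+1) inside K-pairing of x k with a(k+1)?  Note sb (k+1) (x k) gives
      -- x k ⬝ᵥ K *ᵥ x (k+1) and x k ⬝ᵥ K *ᵥ a (k+1) terms.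
      rw [hx k]
      simp only [Matrix.mulVec_add, Matrix.mulVec_smul, dotProduct_add,
        dotProduct_smul, smul_eq_mul]
      rw [symdot hKt (v k) (x k), symdot hKt (a k) (x k)]
      rw [hcross k, hx k]
      simp only [add_dotProduct, smul_dotProduct, smul_eq_mul]
      rw [symdot hKt (v k) (a k)]
      ring
    simp only [hFdef]
    rw [e1, e2]
    linarith [key]
  have hconst : ∀ k, F k = F 0 := by
    intro k
    induction k with
    | zero => rfl
    | succ k ih => rw [hcons k, ih]
  -- positivity decomposition
  have hKinv : K⁻¹.PosDef := hK.inv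
  have hdecomp : ∀ k, F k = v k ⬝ᵥ M *ᵥ v k
      + (M *ᵥ a k) ⬝ᵥ K⁻¹ *ᵥ (M *ᵥ a k) + (β - 1/4) * h^2 * (a k ⬝ᵥ M *ᵥ a k) := by
    intro k
    have h1 : K⁻¹ *ᵥ (M *ᵥ a k) = -(x k) - b2 • a k := by
      rw [haM k]
      have h2 : K⁻¹ *ᵥ (K *ᵥ x k) = x k := by
        rw [Matrix.mulVec_mulVec, Matrix.nonsing_inv_mul _ hKdetu, Matrix.one_mulVec]
      rw [Matrix.mulVec_sub, Matrix.mulVec_neg, h2, Matrix.mulVec_smul]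
      rw [Matrix.mulVec_mulVec, Matrix.nonsing_inv_mul _ hKdetu, Matrix.one_mulVec]
    have h3 : (M *ᵥ a k) ⬝ᵥ K⁻¹ *ᵥ (M *ᵥ a k)
        = -(x k ⬝ᵥ M *ᵥ a k) - b2 * (a k ⬝ᵥ M *ᵥ a k) := by
      rw [h1, dotProduct_sub, dotProduct_neg, dotProduct_smul,
        dotProduct_comm (M *ᵥ a k) (x k), dotProduct_comm (M *ᵥ a k) (a k)]
      simp [smul_eq_mul]
    simp only [hFdef]
    rw [h3, hb2def]
    ring
  -- lower bounds
  obtain ⟨cM, hcM, hcMle⟩ := posdef_lower hM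
  obtain ⟨cK, hcK, hcKle⟩ := posdef_lower hKinv
  obtain ⟨CB, hCB0, hCB⟩ := mulVec_norm_bound (K⁻¹ * S * M⁻¹)
  have hxy : ∀ k, x k = -((K⁻¹ * S * M⁻¹) *ᵥ (M *ᵥ a k)) := by
    intro k
    have h1 : M⁻¹ *ᵥ (M *ᵥ a k) = a k := by
      rw [Matrix.mulVec_mulVec, Matrix.nonsing_inv_mul _ hMdetu, Matrix.one_mulVec]
    have h2 : (K⁻¹ * S * M⁻¹) *ᵥ (M *ᵥ a k) = K⁻¹ *ᵥ (S *ᵥ (M⁻¹ *ᵥ (M *ᵥ a k))) := by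
      simp only [Matrix.mulVec_mulVec, Matrix.mul_assoc]
    rw [h2, h1, haS k, Matrix.mulVec_neg, Matrix.mulVec_mulVec,
      Matrix.nonsing_inv_mul _ hKdetu, Matrix.one_mulVec, neg_neg]
  obtain ⟨E, hEc⟩ : ∃ E : ℝ, ∀ k, F k = E := ⟨F 0, hconst⟩
  have hterms : ∀ k, 0 ≤ (M *ᵥ a k) ⬝ᵥ K⁻¹ *ᵥ (M *ᵥ a k) ∧
      0 ≤ (β - 1/4) * h^2 * (a k ⬝ᵥ M *ᵥ a k) ∧ 0 ≤ v k ⬝ᵥ M *ᵥ v k := by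
    intro k
    exact ⟨quad_nonneg hKinv.posSemidef _,
      mul_nonneg (by nlinarith) (quad_nonneg hM.posSemidef _),
      quad_nonneg hM.posSemidef _⟩
  have hE0 : 0 ≤ E := by
    rw [← hEc 0, hdecomp 0]
    obtain ⟨h1, h2, h3⟩ := hterms 0
    linarith
  have hvb : ∀ k, ‖v k‖ ≤ Real.sqrt (E / cM) := by
    intro k
    have h1 : cM * ‖v k‖ ^ 2 ≤ E := by
      have := hcMle (v k)
      have h2 := hdecomp k
      rw [hEc k] at h2
      obtain ⟨hq1, hq2, _⟩ := hterms k
      calc cM * ‖v k‖ ^ 2 ≤ v k ⬝ᵥ M *ᵥ v k := this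
        _ ≤ E := by linarith [hq1, hq2, h2.ge]
    have h2 : ‖v k‖ ^ 2 ≤ E / cM := by
      rw [le_div_iff₀ hcM]; linarith
    calc ‖v k‖ = Real.sqrt (‖v k‖ ^ 2) := by rw [Real.sqrt_sq (norm_nonneg _)]
      _ ≤ Real.sqrt (E / cM) := Real.sqrt_le_sqrt h2
  have hxb : ∀ k, ‖x k‖ ≤ CB * Real.sqrt (E / cK) := by
    intro k
    have h1 : cK * ‖M *ᵥ a k‖ ^ 2 ≤ E := by
      have := hcKle (M *ᵥ a k)
      have h2 := hdecomp k
      rw [hEc k] at h2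
      obtain ⟨_, hq2, hq3⟩ := hterms k
      calc cK * ‖M *ᵥ a k‖ ^ 2 ≤ M *ᵥ a k ⬝ᵥ K⁻¹ *ᵥ M *ᵥ a k := this
        _ ≤ E := by linarith [hq2, hq3, h2.ge]
    have h2 : ‖M *ᵥ a k‖ ≤ Real.sqrt (E / cK) := by
      have h3 : ‖M *ᵥ a k‖ ^ 2 ≤ E / cK := by rw [le_div_iff₀ hcK]; linarith
      calc ‖M *ᵥ a k‖ = Real.sqrt (‖M *ᵥ a k‖ ^ 2) := by rw [Real.sqrt_sq (norm_nonneg _)]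
        _ ≤ Real.sqrt (E / cK) := Real.sqrt_le_sqrt h3
    calc ‖x k‖ = ‖(K⁻¹ * S * M⁻¹) *ᵥ (M *ᵥ a k)‖ := by rw [hxy k, norm_neg]
      _ ≤ CB * ‖M *ᵥ a k‖ := hCB _
      _ ≤ CB * Real.sqrt (E / cK) := mul_le_mul_of_nonneg_left h2 hCB0
  exact ⟨CB * Real.sqrt (E / cK) + Real.sqrt (E / cM), fun k =>
    add_le_add (hxb k) (hvb k)⟩
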